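/- Let δ be a limit ordinal with cf(δ) > ℵ₁ and let η̄ = ⟨η_α : α < δ⟩ be a <*-increasing sequence in ωω. Then the forcing notion Q_η̄ satisfies the countable chain condition: every uncountable subset of Q_η̄ contains two compatible conditions. -/

import Mathlib

/-- `f <* g` for `f g : ℕ → ℕ` : `{n : f n ≥ g n}` is finite. -/
def LtStar (f g : ℕ → ℕ) : Prop := {n | g n ≤ f n}.Finite

/-- `f <* ν` for `f : ℕ → ℕ`, `ν : ℕ → ω+1` : `{n : f n ≥ ν n}` is finite. -/
def LtStarT (f : ℕ → ℕ) (ν : ℕ → ℕ∞) : Prop := {n | ν n ≤ (f n : ℕ∞)}.Finite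

/-- A condition of the forcing `Q_η̄`: a triple `(ρ, α, g)` with `ρ ∈ ω^{<ω}`,
`α < δ`, `g ∈ F_η̄`, and `η_α(n) ≤ g(n)` for all `n ≥ lg ρ`. -/
structure QCond (δ : Ordinal) (η : Ordinal → ℕ → ℕ) where
  ρ : List ℕ
  α : Ordinal
  g : ℕ → ℕ∞
  hα : α < δ
  hg : ∀ β, β < δ → LtStarT (η β) g
  hbound : ∀ n, ρ.length ≤ n → (η α n : ℕ∞) ≤ g n

/-- The order of `Q_η̄`. -/
def QLE {δ : Ordinal} {η : Ordinal → ℕ → ℕ} (p q : QCond δ η) : Prop :=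
  p.ρ <+: q.ρ ∧ p.α ≤ q.α ∧ (∀ n, q.g n ≤ p.g n) ∧
    (∀ n, q.ρ.length ≤ n → η p.α n ≤ η q.α n) ∧
    (∀ n, p.ρ.length ≤ n → n < q.ρ.length →
      η p.α n ≤ q.ρ.getD n 0 ∧ (q.ρ.getD n 0 : ℕ∞) ≤ p.g n)

/-- If `cf(δ) > ℵ₁` then `Q_η̄` satisfies the c.c.c.: every uncountable set of
conditions contains two (distinct) compatible conditions. -/
theorem QCond_ccc (δ : Ordinal) (hδ : Order.IsSuccLimit δ)
    (hcof : Cardinal.aleph 1 < δ.cof) (η : Ordinal → ℕ → ℕ)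
    (hinc : ∀ a b, a < b → b < δ → LtStar (η a) (η b)) :
    ∀ S : Set (QCond δ η), ¬ S.Countable →
      ∃ p ∈ S, ∃ q ∈ S, p ≠ q ∧ ∃ r : QCond δ η, QLE p r ∧ QLE q r := by
  intro S hS
  -- extract a subset of size ℵ₁
  have h1 : Cardinal.aleph 1 ≤ Cardinal.mk S := by
    rw [← Cardinal.succ_aleph0, Order.succ_le_iff, ← not_le,
      Cardinal.le_aleph0_iff_set_countable]
    exact hS
  obtain ⟨T, hTS, hT⟩ := Cardinal.le_mk_iff_exists_subset.mp h1
  -- transport the index set down one universe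
  have hmin : min (Cardinal.aleph 1) δ.cof = Cardinal.aleph 1 := min_eq_left hcof.le
  obtain ⟨e⟩ : Nonempty (T ≃ Quotient.out ((min (Cardinal.aleph 1) δ.cof : Cardinal))) := by
    rw [← Cardinal.lift_mk_eq', hT, Cardinal.mk_out, hmin,
      Cardinal.lift_aleph, Cardinal.lift_aleph]
    simp
  -- α* above all α^p, p ∈ T
  set f : Quotient.out ((min (Cardinal.aleph 1) δ.cof : Cardinal)) → Ordinal :=
    fun x => Order.succ ((e.symm x).1.α) with hfdef
  have hsup : iSup f < δ := by
    apply Ordinal.iSup_lt_ord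
    · rw [Cardinal.mk_out, hmin]; exact hcof
    · exact fun x => hδ.succ_lt (e.symm x).1.hα
  set A : Ordinal := iSup f with hA
  have hlt : ∀ p : T, p.1.α < A := by
    intro p
    have h := Ordinal.le_iSup f (e p)
    rw [hfdef] at h
    simp only [e.symm_apply_apply] at h
    exact (Order.lt_succ _).trans_le h
  -- thresholds
  have hNex : ∀ p : T, ∃ N : ℕ, ∀ n, N ≤ n →
      η p.1.α n < η A n ∧ (η A n : ℕ∞) < p.1.g n := by
    intro p
    have h2 : ({n | η A n ≤ η p.1.α n} ∪ {n | p.1.g n ≤ (η A n : ℕ∞)}).Finite :=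
      (hinc _ _ (hlt p) hsup).union (p.1.hg A hsup)
    obtain ⟨b, hb⟩ := h2.bddAbove
    refine ⟨b + 1, fun n hn => ?_⟩
    have hn1 : n ∉ {n | η A n ≤ η p.1.α n} ∪ {n | p.1.g n ≤ (η A n : ℕ∞)} := by
      intro h
      exact absurd (hb h) (by omega)
    simp only [Set.mem_union, Set.mem_setOf_eq, not_or, not_le] at hn1
    exact hn1
  choose N hN using hNex
  -- the countable invariant
  set F : T → List ℕ × ℕ × List ℕ := fun p =>
    (p.1.ρ, N p, (List.range (max p.1.ρ.length (N p))).map (η p.1.α)) with hF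
  have hninj : ¬ Function.Injective F := by
    intro hFinj
    have hc : Countable T := hFinj.countable
    have : T.Countable := Set.countable_coe_iff.mp hc
    have h2 := this.le_aleph0
    rw [hT] at h2
    exact absurd h2 (not_le.mpr Cardinal.aleph0_lt_aleph_one)
  rw [Function.not_injective_iff] at hninj
  obtain ⟨p, q, hpq, hne⟩ := hninj
  simp only [hF, Prod.mk.injEq] at hpq
  obtain ⟨hρ, hNpq, hmap⟩ := hpq
  -- notation
  set L := p.1.ρ.length with hL
  set k := max L (N p) with hk
  have hLk : L ≤ k := le_max_left _ _
  have hNk : N p ≤ k := le_max_right _ _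
  have hLq : q.1.ρ.length = L := by rw [← hρ, hL]
  have hkq : max q.1.ρ.length (N q) = k := by rw [hLq, ← hNpq]
  -- agreement of η below k
  have hagree : ∀ n, n < k → η p.1.α n = η q.1.α n := by
    intro n hn
    rw [hkq] at hmap
    have h1 : ((List.range k).map (η p.1.α))[n]'(by simpa using hn)
        = ((List.range k).map (η q.1.α))[n]'(by simpa using hn) := by
      simp only [hmap]
    simpa using h1
  -- the common extension
  set ext : List ℕ := (List.range (k - L)).map (fun i => η p.1.α (L + i)) with hext
  have hlen : (p.1.ρ ++ ext).length = k := by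
    simp [hext, ← hL]
    omega
  have hgetD : ∀ n, L ≤ n → n < k → (p.1.ρ ++ ext).getD n 0 = η p.1.α n := by
    intro n h1 h2
    rw [List.getD_append_right _ _ _ _ (by rw [← hL]; exact h1)]
    rw [List.getD_eq_getElem _ _ (by simp only [hext, List.length_map, List.length_range]; omega)]
    simp only [hext, List.getElem_map, List.getElem_range]
    congr 1
    omega
  refine ⟨p.1, hTS p.2, q.1, hTS q.2, fun h => hne (Subtype.ext h), ?_⟩
  refine ⟨⟨p.1.ρ ++ ext, A, fun n => min (p.1.g n) (q.1.g n), hsup, ?_, ?_⟩, ?_, ?_⟩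
  · -- hg
    intro β hβ
    apply Set.Finite.subset ((p.1.hg β hβ).union (q.1.hg β hβ))
    intro n hn
    simp only [Set.mem_setOf_eq, min_le_iff] at hn
    simpa only [Set.mem_union, Set.mem_setOf_eq] using hn
  · -- hbound
    intro n hn
    rw [hlen] at hn
    exact le_min (hN p n (hNk.trans hn)).2.le
      (hN q n (by rw [← hNpq]; exact hNk.trans hn)).2.le
  · -- QLE p r
    refine ⟨List.prefix_append _ _, (hlt p).le, fun n => min_le_left _ _, ?_, ?_⟩
    · intro n hn
      rw [hlen] at hn
      exact (hN p n (hNk.trans hn)).1.le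
    · intro n h1 h2
      rw [hlen] at h2
      rw [hgetD n h1 h2]
      exact ⟨le_refl _, p.1.hbound n h1⟩
  · -- QLE q r
    refine ⟨hρ ▸ List.prefix_append _ _, (hlt q).le, fun n => min_le_right _ _, ?_, ?_⟩
    · intro n hn
      rw [hlen] at hn
      exact (hN q n (by rw [← hNpq]; exact hNk.trans hn)).1.le
    · intro n h1 h2
      rw [hlen] at h2
      rw [hLq] at h1
      rw [hgetD n h1 h2, ← hagree n h2]
      refine ⟨le_refl _, ?_⟩
      have := q.1.hbound n (by rw [hLq]; exact h1)
      rwa [← hagree n h2] at this
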